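/- With F̃ as above, every object Z = (X, Y, η) of F̃ admits a projective resolution 0 → F(Y) → X × E(Y) → Z → 0, where the first map is (η, ι) and the second is f − μ for the canonical morphisms; in particular F̃ has enough projectives and is hereditary. -/

import Mathlib

open CategoryTheory CategoryTheory.Limits CategoryTheory.Abelian ZeroObject

universe w v₁ v₂ u₁ u₂

variable {A : Type u₁} [Category.{v₁} A] [Abelian A]
variable {B : Type u₂} [Category.{v₂} B] [Abelian B]
variable (F : B ⥤ A) [F.Additive]

/-- An abelian category is semi-simple when every short exact sequence splits. -/
def IsSemisimpleCat (D : Type*) [Category D] [Abelian D] : Prop :=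
  ∀ S : ShortComplex D, S.ShortExact → Nonempty S.Splitting


section AuxVanish

universe w' v u


section Vanish
set_option linter.unusedSectionVars false

variable {C : Type u} [Category.{v} C] [Abelian C]

lemma my_qh_hom_from_single_eq_zero [HasDerivedCategory.{w'} C]
    {P : C} (hP : Projective P) {M : HomotopyCategory C (ComplexShape.up ℤ)}
    (hM : IsZero ((HomotopyCategory.homologyFunctor C (ComplexShape.up ℤ) (0 : ℤ)).obj M))
    (φ : DerivedCategory.Qh.obj ((HomotopyCategory.quotient C (ComplexShape.up ℤ)).obj
        ((HomologicalComplex.single C (ComplexShape.up ℤ) 0).obj P)) ⟶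
        DerivedCategory.Qh.obj M) :
    φ = 0 := by
  haveI : (HomotopyCategory.quasiIso C (ComplexShape.up ℤ)).HasLeftCalculusOfFractions := by
    rw [HomotopyCategory.quasiIso_eq_subcategoryAcyclic_W]; infer_instance
  obtain ⟨α, hα⟩ := Localization.exists_leftFraction DerivedCategory.Qh
    (HomotopyCategory.quasiIso C (ComplexShape.up ℤ)) φ
  obtain ⟨g, hg⟩ := (HomotopyCategory.quotient C (ComplexShape.up ℤ)).map_surjective α.f
  -- homology of the target complex vanishes in degree 0
  haveI := α.hs (0 : ℤ)
  have hZ : IsZero ((HomotopyCategory.homologyFunctor C (ComplexShape.up ℤ) (0 : ℤ)).obj α.Y') :=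
    IsZero.of_iso hM (asIso ((HomotopyCategory.homologyFunctor C
      (ComplexShape.up ℤ) (0 : ℤ)).map α.s)).symm
  have hZc : IsZero ((α.Y'.as).homology (0 : ℤ)) :=
    IsZero.of_iso hZ ((HomotopyCategory.homologyFunctorFactors C
      (ComplexShape.up ℤ) (0 : ℤ)).app α.Y'.as).symm
  have hexact : ((α.Y'.as).sc (0 : ℤ)).Exact := by
    rw [ShortComplex.exact_iff_isZero_homology]
    exact hZc
  haveI : Projective P := hP
  let e := HomologicalComplex.singleObjXSelf (ComplexShape.up ℤ) (0 : ℤ) P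
  have hu : (e.inv ≫ g.f 0) ≫ ((α.Y'.as).sc (0 : ℤ)).g = 0 := by
    have := g.comm (0 : ℤ) ((ComplexShape.up ℤ).next 0)
    change (e.inv ≫ g.f 0) ≫ (α.Y'.as).d 0 ((ComplexShape.up ℤ).next 0) = 0
    rw [Category.assoc, this, HomologicalComplex.single_obj_d, zero_comp, comp_zero]
  let h : P ⟶ (α.Y'.as).X ((ComplexShape.up ℤ).prev 0) :=
    hexact.liftFromProjective (e.inv ≫ g.f 0) hu
  have hh : h ≫ (α.Y'.as).d ((ComplexShape.up ℤ).prev 0) 0 = e.inv ≫ g.f 0 :=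
    hexact.liftFromProjective_comp (e.inv ≫ g.f 0) hu
  -- build a homotopy from g to 0
  have H : Homotopy g 0 := by
    refine
      { hom := fun i j =>
          if hij : i = 0 ∧ j = (ComplexShape.up ℤ).prev 0 then
            eqToHom (congrArg (fun t =>
              ((HomologicalComplex.single C (ComplexShape.up ℤ) 0).obj P).X t) hij.1) ≫
              e.hom ≫ h ≫ eqToHom (congrArg (fun t => (α.Y'.as).X t) hij.2.symm)
          else 0
        zero := ?_
        comm := ?_ }
    · intro i j hij
      rw [dif_neg]
      rintro ⟨rfl, rfl⟩
      exact hij (by simp [CochainComplex.prev])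
    · intro i
      by_cases hi : i = 0
      · subst hi
        have hrel : (ComplexShape.up ℤ).Rel ((ComplexShape.up ℤ).prev 0) 0 := by
          simp [CochainComplex.prev]
        have hrel' : (ComplexShape.up ℤ).Rel 0 ((ComplexShape.up ℤ).next 0) := by
          simp [CochainComplex.next]
        rw [prevD_eq _ hrel, dNext_eq _ hrel']
        rw [HomologicalComplex.single_obj_d, zero_comp]
        rw [dif_pos ⟨rfl, rfl⟩]
        simp only [eqToHom_refl, Category.comp_id, Category.id_comp,
          HomologicalComplex.zero_f_apply, add_zero, zero_add, Category.assoc]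
        rw [hh]
        simp [e]
      · apply (HomologicalComplex.isZero_single_obj_X
          (ComplexShape.up ℤ) 0 P i hi).eq_of_src
  have hf0 : α.f = 0 := by
    rw [← hg, HomotopyCategory.eq_of_homotopy g 0 H, Functor.map_zero]; rfl
  rw [hα]
  haveI := Localization.inverts DerivedCategory.Qh
    (HomotopyCategory.quasiIso C (ComplexShape.up ℤ)) _ α.hs
  have : α.map DerivedCategory.Qh (Localization.inverts _ _) =
      DerivedCategory.Qh.map α.f ≫ inv (DerivedCategory.Qh.map α.s) := rfl
  rw [this, hf0, Functor.map_zero, zero_comp]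

end Vanish

section Vanish2

variable {C : Type u} [Category.{v} C] [Abelian C] [HasExt.{w} C]

lemma my_ext_subsingleton_of_projective {P : C} (hP : Projective P) (Y : C) {n : ℕ}
    (hn : 1 ≤ n) : Subsingleton (Abelian.Ext.{w} P Y n) := by
  letI := HasDerivedCategory.standard C
  have key : ∀ (ψ : (DerivedCategory.singleFunctor C 0).obj P ⟶
      (((DerivedCategory.singleFunctor C 0).obj Y)⟦(n : ℤ)⟧)), ψ = 0 := by
    intro ψ
    have hσ : (n : ℤ) + (-(n : ℤ)) = 0 := by omega
    let σ := (DerivedCategory.singleFunctors C).shiftIso (n : ℤ) (-(n : ℤ)) 0 hσ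
    have hψ : ψ = (ψ ≫ σ.hom.app Y) ≫ σ.inv.app Y := by
      simp [σ]
    have hM : IsZero ((HomotopyCategory.homologyFunctor C (ComplexShape.up ℤ) (0 : ℤ)).obj
        ((HomotopyCategory.quotient C (ComplexShape.up ℤ)).obj
          ((HomologicalComplex.single C (ComplexShape.up ℤ) (-(n : ℤ))).obj Y))) := by
      refine IsZero.of_iso ?_ ((HomotopyCategory.homologyFunctorFactors C
        (ComplexShape.up ℤ) (0 : ℤ)).app ((HomologicalComplex.single C
        (ComplexShape.up ℤ) (-(n : ℤ))).obj Y))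
      exact HomologicalComplex.isZero_single_obj_homology _ _ _ _ (by omega)
    have hz : ψ ≫ σ.hom.app Y = 0 := my_qh_hom_from_single_eq_zero hP hM (ψ ≫ σ.hom.app Y)
    rw [hψ, hz, Limits.zero_comp]
  constructor
  intro a b
  apply Abelian.Ext.ext
  rw [key a.hom, key b.hom]

end Vanish2


end AuxVanish

set_option linter.unusedSectionVars false

section SS
variable {D : Type u₁} [Category.{v₁} D] [Abelian D]

lemma my_projective_of_isSemisimpleCat (hD : IsSemisimpleCat D) (X : D) : Projective X := by
  constructor
  intro E Y f e he
  let S := ShortComplex.mk (kernel.ι e) e (kernel.condition e)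
  have hS : S.ShortExact :=
    { exact := S.exact_of_f_is_kernel (kernelIsKernel e)
      mono_f := inferInstanceAs (Mono (kernel.ι e))
      epi_g := he }
  obtain ⟨σ⟩ := hD S hS
  exact ⟨f ≫ σ.s, by rw [Category.assoc]; rw [σ.s_g]; exact Category.comp_id f⟩

end SS

section CommaLemmas

variable [Abelian (Comma F (𝟭 A))]
attribute [-instance] CategoryTheory.instPreadditiveComma
attribute [-instance] CategoryTheory.CommaMorphism.instZeroHomComma

/-- the zero-ish object of the comma category -/
noncomputable def commaN : Comma F (𝟭 A) :=
  Comma.mk (left := (0 : B)) (right := (0 : A)) (hom := 0)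

lemma commaN_isZero : IsZero (commaN F) := by
  constructor
  · intro W
    refine ⟨⟨⟨{ left := 0, right := 0, w := by rw [Functor.map_zero, Functor.map_zero, zero_comp, comp_zero] }⟩, ?_⟩⟩
    intro m
    apply CommaMorphism.ext
    · exact (isZero_zero B).eq_of_src _ _
    · exact (isZero_zero A).eq_of_src _ _
  · intro W
    refine ⟨⟨⟨{ left := 0, right := 0, w := by rw [Functor.map_zero, Functor.map_zero, zero_comp, comp_zero] }⟩, ?_⟩⟩
    intro m
    apply CommaMorphism.ext
    · exact (isZero_zero B).eq_of_tgt _ _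
    · exact (isZero_zero A).eq_of_tgt _ _

lemma comma_zero_left {W W' : Comma F (𝟭 A)} :
    (0 : W ⟶ W').left = 0 ∧ (0 : W ⟶ W').right = 0 := by
  let t : W ⟶ commaN F := { left := 0, right := 0, w := by rw [Functor.map_zero, Functor.map_zero, zero_comp, comp_zero] }
  let f : commaN F ⟶ W' := { left := 0, right := 0, w := by rw [Functor.map_zero, Functor.map_zero, zero_comp, comp_zero] }
  have ht : t = 0 := (commaN_isZero F).eq_of_tgt _ _
  have : (0 : W ⟶ W') = t ≫ f := by rw [ht, Limits.zero_comp]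
  constructor
  · rw [this]; simp [t, f]
  · rw [this]; simp [t, f]

lemma comma_hom_eq_zero {W W' : Comma F (𝟭 A)} (f : W ⟶ W')
    (h1 : f.left = 0) (h2 : f.right = 0) : f = 0 := by
  apply CommaMorphism.ext
  · rw [h1, (comma_zero_left F).1]
  · rw [h2, (comma_zero_left F).2]

lemma comma_mono_of {W W' : Comma F (𝟭 A)} (f : W ⟶ W')
    (h1 : Mono f.left) (h2 : Mono f.right) : Mono f := by
  constructor
  intro T u v huv
  apply CommaMorphism.ext
  · exact (cancel_mono f.left).1 (by
      rw [← Comma.comp_left, ← Comma.comp_left, huv])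
  · exact (cancel_mono f.right).1 (by
      rw [← Comma.comp_right, ← Comma.comp_right, huv])

lemma comma_epi_of {W W' : Comma F (𝟭 A)} (f : W ⟶ W')
    (h1 : Epi f.left) (h2 : Epi f.right) : Epi f := by
  constructor
  intro T u v huv
  apply CommaMorphism.ext
  · exact (cancel_epi f.left).1 (by
      rw [← Comma.comp_left, ← Comma.comp_left, huv])
  · exact (cancel_epi f.right).1 (by
      rw [← Comma.comp_right, ← Comma.comp_right, huv])

lemma comma_epi_left {W W' : Comma F (𝟭 A)} (e : W ⟶ W') [Epi e] : Epi e.left := by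
  constructor
  intro T u v huv
  let Tc : Comma F (𝟭 A) := Comma.mk (left := T) (right := (0 : A)) (hom := 0)
  let uc : W' ⟶ Tc := { left := u, right := 0, w := by simp [Tc] }
  let vc : W' ⟶ Tc := { left := v, right := 0, w := by simp [Tc] }
  have : e ≫ uc = e ≫ vc := by
    apply CommaMorphism.ext
    · simpa [uc, vc] using huv
    · simp [uc, vc]
  have := (cancel_epi e).1 this
  simpa [uc, vc] using congrArg CommaMorphism.left this

lemma comma_epi_right [PreservesFiniteColimits F] {W W' : Comma F (𝟭 A)} (e : W ⟶ W') [Epi e] :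
    Epi e.right := by
  haveI : Epi e.left := comma_epi_left F e
  haveI : Epi (F.map e.left) := inferInstance
  constructor
  intro T u v huv
  have hsub : e.right ≫ (u - v) = 0 := by
    rw [Preadditive.comp_sub, huv, sub_self]
  have h0 : W'.hom ≫ (u - v) = 0 := by
    rw [← cancel_epi (F.map e.left), ← Category.assoc, comp_zero]
    have hw := e.w
    dsimp at hw
    rw [hw, Category.assoc, hsub, comp_zero]
  let Tc : Comma F (𝟭 A) := Comma.mk (left := (0 : B)) (right := T) (hom := 0)
  let uc : W' ⟶ Tc := { left := 0, right := u - v, w := by simp [Tc, h0] }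
  let vc : W' ⟶ Tc := { left := 0, right := 0, w := by simp [Tc] }
  have : e ≫ uc = e ≫ vc := by
    apply CommaMorphism.ext
    · simp [uc, vc]
    · simpa [uc, vc] using hsub
  have := (cancel_epi e).1 this
  have := congrArg CommaMorphism.right this
  simp only [uc, vc] at this
  rw [sub_eq_zero] at this
  exact this

end CommaLemmas

section Helpers
variable {D : Type u₁} [Category.{v₁} D] [Abelian D]

lemma aux_neg_id {X Y : D} (f : X ⟶ Y) (h : f ≫ (-𝟙 Y) = 0) : f = 0 := by
  simpa using h

lemma aux_add_neg {X Y : D} (f : X ⟶ Y) : f + 𝟙 X ≫ (-f) = 0 := by simp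

lemma aux_fst {W X Y : D} (g : W ⟶ X ⊞ Y) (f : Y ⟶ X) :
    ((g ≫ biprod.snd) ≫ biprod.lift f (𝟙 Y)) ≫ biprod.fst = g ≫ biprod.snd ≫ f := by simp

lemma aux_snd {W X Y : D} (g : W ⟶ X ⊞ Y) (f : Y ⟶ X) :
    ((g ≫ biprod.snd) ≫ biprod.lift f (𝟙 Y)) ≫ biprod.snd = g ≫ biprod.snd := by simp

lemma aux_retract {W X Y : D} (g : W ⟶ Y) (f : Y ⟶ X) :
    g = g ≫ biprod.lift f (𝟙 Y) ≫ biprod.snd := by simp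

end Helpers

/-- The object `F(Y)` of `ℱ̃ = Comma F (𝟭 A)`, i.e. the triple `(F(Y), 0, 0)`,
for `Z = (X, Y, η)`. -/
noncomputable def objFY (Z : Comma F (𝟭 A)) : Comma F (𝟭 A) :=
  Comma.mk (left := (0 : B)) (right := F.obj Z.left) (hom := 0)

/-- The object `X × E(Y)` of `ℱ̃`, i.e. the triple `(X ⊞ F(Y), Y, biprod.inr)`,
for `Z = (X, Y, η)`. -/
noncomputable def objP (Z : Comma F (𝟭 A)) : Comma F (𝟭 A) :=
  Comma.mk (left := Z.left) (right := Z.right ⊞ F.obj Z.left) (hom := biprod.inr)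

/-- The morphism `(η, ι) : F(Y) ⟶ X × E(Y)` in `ℱ̃`. -/
noncomputable def morα (Z : Comma F (𝟭 A)) : objFY F Z ⟶ objP F Z where
  left := 0
  right := biprod.lift Z.hom (𝟙 (F.obj Z.left))
  w := by
    first
      | (rw [Functor.map_zero, zero_comp]; simp [objFY, objP]; done)
      | (rw [Functor.map_zero, zero_comp]; simp [objFY, objP]; rfl)
      | (rw [Functor.map_zero, zero_comp]; exact zero_comp.symm)
      | (dsimp only; rw [Functor.map_zero, zero_comp]; simp [objFY, objP])
      | (simp only [Functor.map_zero, zero_comp]; simp [objFY, objP])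

/-- The morphism `f − μ : X × E(Y) ⟶ Z` in `ℱ̃`, where `f : X → Z` is the canonical
inclusion and `μ : E(Y) → Z` the canonical morphism. -/
noncomputable def morβ (Z : Comma F (𝟭 A)) : objP F Z ⟶ Z where
  left := -𝟙 Z.left
  right := biprod.desc (𝟙 Z.right) (-Z.hom)
  w := by simp [objP]


section Proj

variable [Abelian (Comma F (𝟭 A))] [PreservesFiniteColimits F]
variable (hA : IsSemisimpleCat A) (hB : IsSemisimpleCat B)

include hA in
lemma objFY_projective (Z : Comma F (𝟭 A)) : Projective (objFY F Z) := by
  constructor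
  intro E Xt f e he
  haveI : Projective ((objFY F Z).right) := my_projective_of_isSemisimpleCat hA _
  haveI : Epi e.right := comma_epi_right F e
  refine ⟨{ left := 0, right := Projective.factorThru f.right e.right, w := ?_ }, ?_⟩
  · rw [Functor.map_zero, zero_comp]; exact zero_comp.symm
  · apply CommaMorphism.ext
    · exact (isZero_zero B).eq_of_src _ _
    · simp

include hA hB in
lemma objP_projective (Z : Comma F (𝟭 A)) : Projective (objP F Z) := by
  constructor
  intro E Xt f e he
  haveI : Projective ((objP F Z).left) := my_projective_of_isSemisimpleCat hB _
  haveI : Projective Z.left := my_projective_of_isSemisimpleCat hB _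
  haveI : Projective Z.right := my_projective_of_isSemisimpleCat hA _
  haveI : Epi e.left := comma_epi_left F e
  haveI : Epi e.right := comma_epi_right F e
  let l : Z.left ⟶ E.left := Projective.factorThru f.left e.left
  refine ⟨{ left := l,
            right := biprod.desc (Projective.factorThru (biprod.inl ≫ f.right) e.right)
              (F.map l ≫ E.hom), w := ?_ }, ?_⟩
  · simp [objP]
  · apply CommaMorphism.ext
    · simp [l]; exact Projective.factorThru_comp f.left e.left
    · apply biprod.hom_ext'
      · exact (biprod.inl_desc_assoc _ _ _).trans (Projective.factorThru_comp _ _)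
      · have hew := e.w
        dsimp at hew
        have hfw := f.w
        dsimp [objP] at hfw
        refine (biprod.inr_desc_assoc _ _ _).trans ?_
        rw [Category.assoc]
        rw [← hew, ← Category.assoc, ← F.map_comp]
        have : l ≫ e.left = f.left := Projective.factorThru_comp f.left e.left
        rw [this, hfw]
end Proj

section SES

variable [Abelian (Comma F (𝟭 A))]
attribute [-instance] CategoryTheory.instPreadditiveComma
attribute [-instance] CategoryTheory.CommaMorphism.instZeroHomComma

lemma morαβ_zero (Z : Comma F (𝟭 A)) : morα F Z ≫ morβ F Z = 0 := by
  apply comma_hom_eq_zero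
  · simp [morα, morβ]; exact zero_comp
  · dsimp [morα, morβ]
    refine biprod.lift_desc.trans ?_
    erw [Category.comp_id]
    exact aux_add_neg Z.hom

noncomputable def sesSC (Z : Comma F (𝟭 A)) : ShortComplex (Comma F (𝟭 A)) :=
  ShortComplex.mk (morα F Z) (morβ F Z) (morαβ_zero F Z)

lemma ses_left_eq_zero {Z T : Comma F (𝟭 A)} (t : T ⟶ objP F Z)
    (ht : t ≫ morβ F Z = 0) : t.left = 0 := by
  have h := congrArg CommaMorphism.left ht
  rw [Comma.comp_left, (comma_zero_left F).1] at h
  exact aux_neg_id t.left h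

lemma ses_fst_eq {Z T : Comma F (𝟭 A)} (t : T ⟶ objP F Z)
    (ht : t ≫ morβ F Z = 0) :
    t.right ≫ biprod.fst = t.right ≫ biprod.snd ≫ Z.hom := by
  have htr := congrArg CommaMorphism.right ht
  simp only [Comma.comp_right, (comma_zero_left F).2] at htr
  dsimp [morβ] at htr
  rw [biprod.desc_eq] at htr
  rw [← sub_eq_zero]
  erw [Preadditive.comp_add, Preadditive.comp_neg, Preadditive.comp_neg] at htr
  erw [Category.comp_id] at htr
  rw [sub_eq_add_neg]
  exact htr

/-- the lift used for the kernel fork -/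
noncomputable def sesLift {Z T : Comma F (𝟭 A)} (t : T ⟶ objP F Z)
    (ht : t ≫ morβ F Z = 0) : T ⟶ objFY F Z where
  left := 0
  right := t.right ≫ biprod.snd
  w := by
    have htl : t.left = 0 := ses_left_eq_zero F t ht
    have htw := t.w
    dsimp [objP] at htw
    rw [htl] at htw; erw [F.map_zero, zero_comp] at htw
    dsimp [objFY]
    erw [F.map_zero, zero_comp, ← Category.assoc, ← htw, zero_comp]

lemma ses_shortExact (Z : Comma F (𝟭 A)) : (sesSC F Z).ShortExact := by
  have hmono : Mono (morα F Z) := by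
    apply comma_mono_of
    · constructor
      intro T u v _
      exact (isZero_zero B).eq_of_tgt _ _
    · haveI : IsSplitMono (biprod.lift Z.hom (𝟙 (F.obj Z.left))) :=
        IsSplitMono.mk' ⟨biprod.snd, by simp⟩
      exact inferInstanceAs (Mono (biprod.lift Z.hom (𝟙 (F.obj Z.left))))
  have hepi : Epi (morβ F Z) := by
    apply comma_epi_of
    · haveI : IsSplitEpi (-𝟙 Z.left) := IsSplitEpi.mk' ⟨-𝟙 Z.left, by simp⟩
      exact inferInstanceAs (Epi (-𝟙 Z.left))
    · haveI : IsSplitEpi (biprod.desc (𝟙 Z.right) (-Z.hom)) :=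
        IsSplitEpi.mk' ⟨biprod.inl, by simp⟩
      exact inferInstanceAs (Epi (biprod.desc (𝟙 Z.right) (-Z.hom)))
  have hker : IsLimit (KernelFork.ofι (sesSC F Z).f (sesSC F Z).zero) := by
    refine KernelFork.IsLimit.ofι _ _ (fun {T} t ht => sesLift F t ht) ?_ ?_
    · intro T t ht
      apply CommaMorphism.ext
      · dsimp [sesSC, morα, sesLift]
        rw [comp_zero, ses_left_eq_zero F t ht]
      · dsimp [sesSC, morα, sesLift]
        apply biprod.hom_ext
        · exact (aux_fst t.right Z.hom).trans (ses_fst_eq F t ht).symm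
        · exact aux_snd t.right Z.hom
    · intro T t ht m hm
      apply CommaMorphism.ext
      · exact (isZero_zero B).eq_of_tgt _ _
      · have hmr := congrArg CommaMorphism.right hm
        simp only [Comma.comp_right] at hmr
        dsimp [sesSC, morα] at hmr
        dsimp [sesLift]
        rw [← hmr]
        exact (aux_retract m.right Z.hom).trans (Category.assoc _ _ _).symm
  exact { exact := (sesSC F Z).exact_of_f_is_kernel hker
          mono_f := hmono
          epi_g := hepi }

lemma morβ_epi (Z : Comma F (𝟭 A)) : Epi (morβ F Z) := (ses_shortExact F Z).epi_g

lemma ext_key [HasExt.{w} (Comma F (𝟭 A))]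
    (hproj1 : ∀ Z : Comma F (𝟭 A), Projective (objFY F Z))
    (hproj2 : ∀ Z : Comma F (𝟭 A), Projective (objP F Z))
    (Z Z' : Comma F (𝟭 A)) (n₀ : ℕ) (hi : 2 ≤ 1 + n₀) :
    ∀ z : Ext Z Z' (1 + n₀), z = 0 := by
    intro z
    have h1 : (Ext.mk₀ (sesSC F Z).g).comp z (zero_add (1 + n₀)) = 0 :=
      (my_ext_subsingleton_of_projective (hproj2 Z) Z' (n := 1 + n₀) (by omega)).allEq _ _
    obtain ⟨x₁, hx₁⟩ := Abelian.Ext.contravariant_sequence_exact₃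
      (ses_shortExact F Z) Z' z h1 (n₀ := n₀) rfl
    have hx0 : x₁ = 0 :=
      (my_ext_subsingleton_of_projective (hproj1 Z) Z' (n := n₀) (by omega)).allEq _ _
    rw [hx0] at hx₁
    rw [← hx₁, Abelian.Ext.comp_zero]; rfl

end SES

/-- With `A = X̃`, `B = 𝒴` semi-simple abelian categories and `F : 𝒴 → X̃` exact, every
object `Z = (X, Y, η)` of `ℱ̃ = Comma F (𝟭 A)` admits a projective resolution
`0 → F(Y) → X × E(Y) → Z → 0` given by `(η, ι)` and `f − μ`; in particular `ℱ̃` has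
enough projectives and is hereditary. -/
theorem triple_category_projective_resolution
    (hA : IsSemisimpleCat A) (hB : IsSemisimpleCat B)
    [PreservesFiniteLimits F] [PreservesFiniteColimits F]
    [Abelian (Comma F (𝟭 A))] [HasExt.{w} (Comma F (𝟭 A))] :
    (∀ Z : Comma F (𝟭 A), ∃ S : ShortComplex (Comma F (𝟭 A)),
      S.ShortExact ∧ S.X₁ = objFY F Z ∧ S.X₂ = objP F Z ∧ S.X₃ = Z ∧
      HEq S.f (morα F Z) ∧ HEq S.g (morβ F Z) ∧
      Projective S.X₁ ∧ Projective S.X₂) ∧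
    EnoughProjectives (Comma F (𝟭 A)) ∧
    (∀ (Z Z' : Comma F (𝟭 A)) (i : ℕ), 2 ≤ i → Subsingleton (Ext Z Z' i)) := by
  have hproj1 : ∀ Z : Comma F (𝟭 A), Projective (objFY F Z) := objFY_projective F hA
  have hproj2 : ∀ Z : Comma F (𝟭 A), Projective (objP F Z) := objP_projective F hA hB
  refine ⟨?_, ?_, ?_⟩
  · intro Z
    generalize (Preadditive.preadditiveHasZeroMorphisms : HasZeroMorphisms (Comma F (𝟭 A))) = z
    obtain rfl : z = @Preadditive.preadditiveHasZeroMorphisms _ _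
      (inferInstance : Abelian (Comma F (𝟭 A))).toPreadditive := Subsingleton.elim _ _
    exact ⟨sesSC F Z, ses_shortExact F Z, rfl, rfl, rfl, HEq.rfl, HEq.rfl,
      hproj1 Z, hproj2 Z⟩
  · refine ⟨fun Z => ?_⟩
    haveI := hproj2 Z
    haveI : Epi (morβ F Z) := morβ_epi F Z
    exact ⟨{ p := objP F Z, f := morβ F Z }⟩
  · intro Z Z' i hi
    obtain ⟨n₀, rfl⟩ : ∃ n₀, i = 1 + n₀ := ⟨i - 1, by omega⟩
    have key : ∀ z : Ext Z Z' (1 + n₀), z = 0 := by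
      exact ext_key F hproj1 hproj2 Z Z' n₀ hi
    constructor
    intro x y
    rw [key x, key y]
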